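/- Let E be a real normed vector space, U ⊆ E open, and Ξ : E → Matrix (Fin 3) (Fin 3) ℝ twice continuously differentiable on U with Ξ(y) invertible for every y ∈ U. For y ∈ U and v ∈ E set ϑ(y)(v) = Ξ(y)⁻¹ · (fderiv Ξ y v). Then for every x ∈ U and all v, w ∈ E: fderiv (y ↦ ϑ(y)(w)) x v − fderiv (y ↦ ϑ(y)(v)) x w + ϑ(x)(v)·ϑ(x)(w) − ϑ(x)(w)·ϑ(x)(v) = 0. (This is the Maurer–Cartan identity dϑ + ϑ∧ϑ = 0 for ϑ = Ξ⁻¹ dΞ, used to integrate Liouville's system on the sphere.) -/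

import Mathlib

open Matrix

attribute [local instance] Matrix.normedAddCommGroup Matrix.normedSpace

namespace Stmt14Aux

noncomputable abbrev M3 := Matrix (Fin 3) (Fin 3) ℝ

noncomputable def entryCLM (i j : Fin 3) : M3 →L[ℝ] ℝ :=
  LinearMap.toContinuousLinearMap
    { toFun := fun A => A i j
      map_add' := fun _ _ => rfl
      map_smul' := fun _ _ => rfl }

@[simp] lemma entryCLM_apply (i j : Fin 3) (A : M3) : entryCLM i j A = A i j := rfl

noncomputable def mulL : M3 →L[ℝ] M3 →L[ℝ] M3 :=
  LinearMap.toContinuousLinearMap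
    { toFun := fun A => LinearMap.toContinuousLinearMap (LinearMap.mulLeft ℝ A)
      map_add' := by intro A B; ext C; simp [add_mul]
      map_smul' := by intro r A; ext C; simp [smul_mul_assoc] }

@[simp] lemma mulL_apply (A B : M3) : mulL A B = A * B := rfl

lemma det_differentiable : Differentiable ℝ (fun A : M3 => A.det) := by
  have : (fun A : M3 => A.det)
      = fun A : M3 => ∑ σ : Equiv.Perm (Fin 3),
          ((Equiv.Perm.sign σ : ℤ) : ℝ) * ∏ i, A (σ i) i := by
    funext A; rw [Matrix.det_apply']
  rw [this]
  refine Differentiable.fun_sum fun σ _ => ?_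
  have hp : Differentiable ℝ (fun A : M3 => ∏ i, A (σ i) i) := by
    intro A
    exact (HasFDerivAt.finset_prod
      (g := fun i (B : M3) => B (σ i) i) (g' := fun i => entryCLM (σ i) i)
      (fun i _ => (entryCLM (σ i) i).hasFDerivAt)).differentiableAt
  exact hp.const_mul _

/-- assembling a matrix-valued map from differentiable entries -/
lemma differentiableAt_matrix {E : Type*} [NormedAddCommGroup E] [NormedSpace ℝ E]
    {f : E → M3} {x : E}
    (h : ∀ i j, DifferentiableAt ℝ (fun y => f y i j) x) :
    DifferentiableAt ℝ f x := by
  have hf : f = fun y => ∑ i : Fin 3, ∑ j : Fin 3, f y i j • Matrix.single i j (1 : ℝ) := by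
    funext y
    simp only [smul_single, smul_eq_mul, mul_one]
    exact matrix_eq_sum_single (f y)
  rw [hf]
  exact DifferentiableAt.fun_sum fun i _ =>
    DifferentiableAt.fun_sum fun j _ => (h i j).smul_const _

lemma adjugate_differentiable : Differentiable ℝ (fun A : M3 => A.adjugate) := by
  intro x
  apply differentiableAt_matrix
  intro i j
  have : (fun A : M3 => A.adjugate i j)
      = fun A : M3 => (A.updateRow j (Pi.single i 1)).det := by
    funext A; rw [Matrix.adjugate_apply]
  rw [this]
  refine DifferentiableAt.comp x (det_differentiable _) ?_
  apply differentiableAt_matrix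
  intro k l
  by_cases hk : k = j
  · subst hk
    simp only [Matrix.updateRow_self]
    exact differentiableAt_const _
  · simp only [Matrix.updateRow_ne hk]
    exact (entryCLM k l).differentiable.differentiableAt

lemma hasFDerivAt_mul {E : Type*} [NormedAddCommGroup E] [NormedSpace ℝ E]
    {f g : E → M3} {f' g' : E →L[ℝ] M3} {x : E}
    (hf : HasFDerivAt f f' x) (hg : HasFDerivAt g g' x) :
    HasFDerivAt (fun y => f y * g y)
      (mulL.precompR E (f x) g' + mulL.precompL E f' (g x)) x :=
  mulL.hasFDerivAt_of_bilinear hf hg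

lemma mul_deriv_apply {E : Type*} [NormedAddCommGroup E] [NormedSpace ℝ E]
    (A B : M3) (f' g' : E →L[ℝ] M3) (v : E) :
    (mulL.precompR E A g' + mulL.precompL E f' B) v = A * g' v + f' v * B := by
  simp [ContinuousLinearMap.precompR, ContinuousLinearMap.precompL, add_comm]
  rfl

end Stmt14Aux

open Stmt14Aux

/-- Let `E` be a real normed vector space, `U ⊆ E` open, and
`Ξ : E → Matrix (Fin 3) (Fin 3) ℝ` twice continuously differentiable on `U` with `Ξ(y)`
invertible for every `y ∈ U`. With `ϑ(y)(v) = Ξ(y)⁻¹·(fderiv Ξ y v)`, for every `x ∈ U` and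
all `v, w ∈ E`:
`fderiv (y ↦ ϑ(y)(w)) x v − fderiv (y ↦ ϑ(y)(v)) x w + ϑ(x)(v)·ϑ(x)(w) − ϑ(x)(w)·ϑ(x)(v) = 0`,
i.e. the Maurer–Cartan identity `dϑ + ϑ∧ϑ = 0` for `ϑ = Ξ⁻¹ dΞ`. -/
theorem stmt14 (E : Type*) [NormedAddCommGroup E] [NormedSpace ℝ E]
    (U : Set E) (hU : IsOpen U)
    (Ξ : E → Matrix (Fin 3) (Fin 3) ℝ)
    (hΞ : ContDiffOn ℝ 2 Ξ U)
    (hΞinv : ∀ y ∈ U, IsUnit (Ξ y)) :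
    ∀ x ∈ U, ∀ v w : E,
      fderiv ℝ (fun y => (Ξ y)⁻¹ * fderiv ℝ Ξ y w) x v
        - fderiv ℝ (fun y => (Ξ y)⁻¹ * fderiv ℝ Ξ y v) x w
        + ((Ξ x)⁻¹ * fderiv ℝ Ξ x v) * ((Ξ x)⁻¹ * fderiv ℝ Ξ x w)
        - ((Ξ x)⁻¹ * fderiv ℝ Ξ x w) * ((Ξ x)⁻¹ * fderiv ℝ Ξ x v) = 0 := by
  intro x hx v w
  have hmem : U ∈ nhds x := hU.mem_nhds hx
  have hΞat : ContDiffAt ℝ 2 Ξ x := hΞ.contDiffAt hmem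
  have hΞdiff : DifferentiableAt ℝ Ξ x := hΞat.differentiableAt two_ne_zero
  have hΞhas : HasFDerivAt Ξ (fderiv ℝ Ξ x) x := hΞdiff.hasFDerivAt
  have hDat := hΞat.fderiv_right (m := 1) (by norm_num)
  have hDdiff : DifferentiableAt ℝ (fderiv ℝ Ξ) x := hDat.differentiableAt one_ne_zero
  have hShas : HasFDerivAt (fderiv ℝ Ξ) (fderiv ℝ (fderiv ℝ Ξ) x) x := hDdiff.hasFDerivAt
  set A : M3 := Ξ x with hA
  set A1 : M3 := (Ξ x)⁻¹ with hA1
  set L : E →L[ℝ] M3 := fderiv ℝ Ξ x with hL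
  set S : E →L[ℝ] E →L[ℝ] M3 := fderiv ℝ (fderiv ℝ Ξ) x with hS
  have hdetx : (Ξ x).det ≠ 0 := by
    have := (Matrix.isUnit_iff_isUnit_det _).mp (hΞinv x hx)
    exact this.ne_zero
  -- differentiability of the inverse
  have hGdiff : DifferentiableAt ℝ (fun y => (Ξ y)⁻¹) x := by
    have heq : (fun y => (Ξ y)⁻¹) = fun y => ((Ξ y).det)⁻¹ • (Ξ y).adjugate := by
      funext y; rw [Matrix.inv_def, Ring.inverse_eq_inv']
    rw [heq]
    have hdetc : DifferentiableAt ℝ ((fun A : M3 => A.det) ∘ Ξ) x :=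
      DifferentiableAt.comp x (det_differentiable (Ξ x)) hΞdiff
    have hadjc : DifferentiableAt ℝ ((fun A : M3 => A.adjugate) ∘ Ξ) x :=
      DifferentiableAt.comp x (adjugate_differentiable (Ξ x)) hΞdiff
    have hinvdet : DifferentiableAt ℝ (fun y => ((Ξ y).det)⁻¹) x := hdetc.inv hdetx
    exact DifferentiableAt.smul (𝕜 := ℝ) (𝕜' := ℝ) (F := M3) hinvdet hadjc
  set G' : E →L[ℝ] M3 := fderiv ℝ (fun y => (Ξ y)⁻¹) x with hG'
  have hGhas : HasFDerivAt (fun y => (Ξ y)⁻¹) G' x := hGdiff.hasFDerivAt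
  -- derivative of the inverse
  have hone : (fun y => (Ξ y)⁻¹ * Ξ y) =ᶠ[nhds x] fun _ => (1 : M3) := by
    filter_upwards [hmem] with y hy
    exact Matrix.nonsing_inv_mul _ ((Matrix.isUnit_iff_isUnit_det _).mp (hΞinv y hy))
  have hprod : HasFDerivAt (fun y => (Ξ y)⁻¹ * Ξ y)
      (mulL.precompR E A1 L + mulL.precompL E G' A) x := hasFDerivAt_mul hGhas hΞhas
  have h0 : HasFDerivAt (fun y => (Ξ y)⁻¹ * Ξ y) 0 x :=
    (hasFDerivAt_const (𝕜 := ℝ) (1 : M3) x).congr_of_eventuallyEq hone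
  have hzero : (mulL.precompR E A1 L + mulL.precompL E G' A) = 0 := hprod.unique h0
  have hGformula : ∀ u : E, G' u = -((A1 * L u) * A1) := by
    intro u
    have h1 : A1 * L u + G' u * A = 0 := by
      have := congrFun (congrArg DFunLike.coe hzero) u
      rwa [mul_deriv_apply] at this
    have h2 : G' u * A = -(A1 * L u) := by linear_combination (norm := noncomm_ring) h1
    have h3 : (G' u * A) * A1 = -(A1 * L u) * A1 := by rw [h2]
    rwa [mul_assoc, Matrix.mul_nonsing_inv _ ((Matrix.isUnit_iff_isUnit_det _).mp (hΞinv x hx)),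
      mul_one, neg_mul] at h3
  -- derivatives of y ↦ ϑ(y)(u)
  have hterm : ∀ u₁ u₂ : E,
      fderiv ℝ (fun y => (Ξ y)⁻¹ * fderiv ℝ Ξ y u₂) x u₁
        = A1 * (S u₁ u₂) + G' u₁ * L u₂ := by
    intro u₁ u₂
    have hDu : HasFDerivAt (fun y => fderiv ℝ Ξ y u₂)
        ((ContinuousLinearMap.apply ℝ M3 u₂).comp S) x :=
      (ContinuousLinearMap.apply ℝ M3 u₂).hasFDerivAt.comp x hShas
    have h := hasFDerivAt_mul (f := fun y => (Ξ y)⁻¹) hGhas hDu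
    erw [h.fderiv, mul_deriv_apply]
    rfl
  rw [hterm v w, hterm w v, hGformula v, hGformula w]
  have hsymm : S v w = S w v := (hΞat.isSymmSndFDerivAt minSmoothness_of_isRCLikeNormedField.le) v w
  rw [hsymm]
  noncomm_ring
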